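/- Every digit string that either is the single digit 0 or has first digit different from 0 appears exactly once in the grid: there is exactly one pair (i,j) of natural numbers with G(i,j) equal to the given string. -/

import Mathlib

abbrev Digit := Fin 3

/-- Helper for `addTwo`, acting on the reversed (least significant digit first) string:
replace each digit `d` by `d - 1 (mod 3)` up to and including the first digit 0;
if no digit 0 occurs, a digit 0 is first prepended at the most significant end
(and then becomes 2). -/
def addTwoAux : List Digit → List Digit
  | [] => [2]
  | d :: rest => if d = 0 then (d + 2) :: rest else (d + 2) :: addTwoAux rest

/-- Adding two in base 3/2: all digits at or to the right of the rightmost 0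
(including that 0) are decreased by 1 modulo 3; if there is no 0, a 0 is first
prepended. -/
def addTwo (w : List Digit) : List Digit := (addTwoAux w.reverse).reverse

open Fin.NatCast in
/-- Binary representation of `j` (digits 0 and 1, most significant first, no leading
zeros), with `binRep 0 = [0]`. -/
def binRep (j : ℕ) : List Digit :=
  if j = 0 then [0] else (Nat.digits 2 j).reverse.map (fun d => (d : Digit))

/-- The grid: row 0 consists of the binary representations in increasing order, and
each subsequent row is obtained entrywise by adding two in base 3/2. -/
def G : ℕ → ℕ → List Digit
  | 0, j => binRep j
  | i + 1, j => addTwo (G i j)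

/-! ### Auxiliary definitions -/

def subTwoAux : List Digit → List Digit
  | [] => []
  | d :: rest => if d = 2 then 0 :: rest else (d + 1) :: subTwoAux rest

def Valid (w : List Digit) : Prop :=
  w = [0] ∨ ∃ d : Digit, ∃ l : List Digit, w = d :: l ∧ d ≠ 0

def v3 (w : List Digit) : ℕ := Nat.ofDigits 3 (w.map Fin.val)

/-! ### Lemmas about `addTwoAux` and `subTwoAux` -/

lemma addTwoAux_ne_nil (r : List Digit) : addTwoAux r ≠ [] := by
  cases r with
  | nil => simp [addTwoAux]
  | cons d rest => unfold addTwoAux; split <;> simp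

lemma two_mem_addTwoAux (r : List Digit) : (2 : Digit) ∈ addTwoAux r := by
  induction r with
  | nil => simp [addTwoAux]
  | cons d rest ih =>
    unfold addTwoAux
    split
    · rename_i h; subst h; simp
    · exact List.mem_cons_of_mem _ ih

lemma addTwoAux_noZero (r : List Digit) (h : (0 : Digit) ∉ r) :
    addTwoAux r = r.map (· + 2) ++ [2] := by
  induction r with
  | nil => simp [addTwoAux]
  | cons d rest ih =>
    simp only [List.mem_cons, not_or] at h
    unfold addTwoAux
    rw [if_neg (fun e => h.1 e.symm)]
    simp [ih h.2]

lemma subTwoAux_addTwoAux (r : List Digit) :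
    subTwoAux (addTwoAux r) = if (0 : Digit) ∈ r then r else r ++ [0] := by
  induction r with
  | nil => simp [addTwoAux, subTwoAux]
  | cons d rest ih =>
    unfold addTwoAux
    by_cases h : d = 0
    · subst h
      simp only [if_pos rfl]
      have : (0 : Digit) + 2 = 2 := by decide
      rw [this]
      simp [subTwoAux]
    · rw [if_neg h]
      have h2 : d + 2 ≠ 2 := by revert h; revert d; decide
      unfold subTwoAux
      rw [if_neg h2]
      have h3 : d + 2 + 1 = d := by revert d; decide
      rw [h3, ih]
      have : ¬ ((0:Digit) = d) := fun e => h e.symm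
      split <;> simp_all

lemma addTwoAux_subTwoAux (r : List Digit) (h : (2 : Digit) ∈ r) :
    addTwoAux (subTwoAux r) = r := by
  induction r with
  | nil => simp at h
  | cons d rest ih =>
    simp only [List.mem_cons] at h
    unfold subTwoAux
    by_cases hd : d = 2
    · subst hd
      rw [if_pos rfl]
      unfold addTwoAux
      rw [if_pos rfl]
      norm_num
    · rw [if_neg hd]
      have h1 : d + 1 ≠ 0 := by clear h ih; revert hd; revert d; decide
      unfold addTwoAux
      rw [if_neg h1]
      have h3 : d + 1 + 2 = d := by clear h1 h ih; revert hd; revert d; decide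
      rw [h3, ih (h.resolve_left (fun e => hd e.symm))]

lemma addTwoAux_append_zero (m : List Digit) (h : (0 : Digit) ∉ m) :
    addTwoAux (m ++ [0]) = addTwoAux m := by
  induction m with
  | nil => simp [addTwoAux]
  | cons d rest ih =>
    simp only [List.mem_cons, not_or] at h
    rw [List.cons_append]
    unfold addTwoAux
    rw [if_neg (fun e => h.1 e.symm), if_neg (fun e => h.1 e.symm), ih h.2]

lemma getLast?_cons_ne {a : Digit} {l : List Digit} (h : l ≠ []) :
    (a :: l).getLast? = l.getLast? := by
  cases l with
  | nil => simp at h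
  | cons b m => rw [List.getLast?_cons_cons]

lemma subTwoAux_ne_nil (r : List Digit) (h : r ≠ []) : subTwoAux r ≠ [] := by
  cases r with
  | nil => simp at h
  | cons d rest => unfold subTwoAux; split <;> simp

lemma subTwoAux_getLast (r : List Digit) (h : (2 : Digit) ∈ r) :
    (subTwoAux r).getLast? = r.getLast? ∨
      ∃ m : List Digit, subTwoAux r = m ++ [0] ∧ (0 : Digit) ∉ m := by
  induction r with
  | nil => simp at h
  | cons d rest ih =>
    simp only [List.mem_cons] at h
    unfold subTwoAux
    by_cases hd : d = 2
    · rw [if_pos hd]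
      cases rest with
      | nil => exact Or.inr ⟨[], rfl, by simp⟩
      | cons e l =>
        left
        rw [List.getLast?_cons_cons, List.getLast?_cons_cons]
    · rw [if_neg hd]
      have h2 : (2 : Digit) ∈ rest := h.resolve_left (fun e => hd e.symm)
      rcases ih h2 with h1 | ⟨m, hm, hm0⟩
      · left
        have hne : rest ≠ [] := by rintro rfl; simp at h2
        have hne2 : subTwoAux rest ≠ [] := subTwoAux_ne_nil _ hne
        rw [getLast?_cons_ne hne2, getLast?_cons_ne hne, h1]
      · right
        refine ⟨(d + 1) :: m, by rw [hm]; simp, ?_⟩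
        simp only [List.mem_cons, not_or]
        exact ⟨by clear hm hm0 ih h; revert hd; revert d; decide, hm0⟩

lemma addTwoAux_getLast? (r : List Digit) (h : r.getLast? ≠ some 0) :
    (addTwoAux r).getLast? ≠ some 0 := by
  induction r with
  | nil => simp [addTwoAux]
  | cons d rest ih =>
    unfold addTwoAux
    by_cases hd : d = 0
    · subst hd
      rw [if_pos rfl]
      cases rest with
      | nil => exact absurd rfl h
      | cons e l =>
        rw [List.getLast?_cons_cons]
        rw [List.getLast?_cons_cons] at h
        exact h
    · rw [if_neg hd]
      rw [getLast?_cons_ne (addTwoAux_ne_nil rest)]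
      cases rest with
      | nil => simp [addTwoAux]
      | cons e l =>
        rw [List.getLast?_cons_cons] at h
        exact ih h

lemma v3_lt (r : List Digit) : v3 r < v3 (addTwoAux r) := by
  induction r with
  | nil => simp [v3, addTwoAux, Nat.ofDigits]
  | cons d rest ih =>
    unfold addTwoAux
    by_cases h : d = 0
    · subst h
      rw [if_pos rfl]
      simp only [v3, List.map_cons, Nat.ofDigits_cons]
      have : ((0:Digit) + 2).val = 2 := by decide
      simp [this]
    · rw [if_neg h]
      simp only [v3, List.map_cons, Nat.ofDigits_cons] at *
      have hv : (d + 2).val + 1 = d.val := by clear ih; revert h; revert d; decide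
      omega

/-! ### Lemmas about `addTwo` -/

def V (w : List Digit) : ℕ := v3 w.reverse

lemma V_lt (u : List Digit) : V u < V (addTwo u) := by
  unfold V addTwo
  rw [List.reverse_reverse]
  exact v3_lt _

lemma two_mem_addTwo (u : List Digit) : (2 : Digit) ∈ addTwo u := by
  unfold addTwo
  rw [List.mem_reverse]
  exact two_mem_addTwoAux _

lemma addTwo_zero : addTwo [0] = [2] := by decide

lemma addTwo_ne_nil (u : List Digit) : addTwo u ≠ [] := by
  intro h
  have := two_mem_addTwo u
  rw [h] at this
  simp at this

lemma addTwo_valid {u : List Digit} (hu : Valid u) : Valid (addTwo u) := by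
  rcases hu with rfl | ⟨d, l, rfl, hd⟩
  · rw [addTwo_zero]
    exact Or.inr ⟨2, [], rfl, by decide⟩
  · right
    have hne : addTwo (d :: l) ≠ [] := by
      unfold addTwo
      simp [addTwoAux_ne_nil]
    obtain ⟨e, m, hem⟩ := List.exists_cons_of_ne_nil hne
    refine ⟨e, m, hem, ?_⟩
    have h1 : (addTwo (d :: l)).head? = some e := by rw [hem]; rfl
    unfold addTwo at h1
    rw [List.head?_reverse] at h1
    have h2 : ((d :: l).reverse).getLast? ≠ some 0 := by
      rw [List.getLast?_reverse]
      intro hcon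
      simp only [List.head?_cons, Option.some.injEq] at hcon
      exact hd hcon
    have := addTwoAux_getLast? _ h2
    rw [h1] at this
    exact fun hcon => this (by rw [hcon])

lemma addTwo_inj {u u' : List Digit} (hu : Valid u) (hu' : Valid u')
    (h : addTwo u = addTwo u') : u = u' := by
  have haux : addTwoAux u.reverse = addTwoAux u'.reverse :=
    List.reverse_injective h
  have hsub := congrArg subTwoAux haux
  rw [subTwoAux_addTwoAux, subTwoAux_addTwoAux] at hsub
  have key : ∀ a b : List Digit, Valid a → Valid b →
      (0 : Digit) ∈ a.reverse → (0 : Digit) ∉ b.reverse →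
      a.reverse = b.reverse ++ [0] → a = b := by
    intro a b ha hb _ _ hab
    exfalso
    have : a = 0 :: b := by
      have := congrArg List.reverse hab
      simpa using this
    rcases ha with ha0 | ⟨d, l, hdl, hd⟩
    · rw [ha0] at this
      have hb0 : b = [] := by simpa using this.symm
      rcases hb with hb1 | ⟨d', l', hdl', _⟩
      · rw [hb1] at hb0; simp at hb0
      · rw [hdl'] at hb0; simp at hb0
    · rw [hdl] at this
      have : d = 0 := by
        have := congrArg List.head? this
        simpa using this
      exact hd this
  by_cases h1 : (0 : Digit) ∈ u.reverse <;> by_cases h2 : (0 : Digit) ∈ u'.reverse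
  · rw [if_pos h1, if_pos h2] at hsub
    exact List.reverse_injective hsub
  · rw [if_pos h1, if_neg h2] at hsub
    exact key u u' hu hu' h1 h2 hsub
  · rw [if_neg h1, if_pos h2] at hsub
    exact (key u' u hu' hu h2 h1 hsub.symm).symm
  · rw [if_neg h1, if_neg h2] at hsub
    have := List.append_cancel_right hsub
    exact List.reverse_injective this

lemma addTwo_surj {w : List Digit} (hw : Valid w) (h2 : (2 : Digit) ∈ w) :
    ∃ u : List Digit, Valid u ∧ addTwo u = w := by
  rcases hw with rfl | ⟨d, l, rfl, hd⟩
  · exfalso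
    revert h2
    decide
  · have h2r : (2 : Digit) ∈ (d :: l).reverse := List.mem_reverse.mpr h2
    have hwne : (d :: l).reverse ≠ [] := by simp
    rcases subTwoAux_getLast _ h2r with hL | ⟨m, hm, hm0⟩
    · -- getLast of subTwoAux equals getLast of reverse = d ≠ 0
      refine ⟨(subTwoAux ((d :: l).reverse)).reverse, ?_, ?_⟩
      · right
        have hne : subTwoAux ((d :: l).reverse) ≠ [] := subTwoAux_ne_nil _ hwne
        have hne2 : (subTwoAux ((d :: l).reverse)).reverse ≠ [] := by simpa using hne
        obtain ⟨e, m', hem⟩ := List.exists_cons_of_ne_nil hne2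
        refine ⟨e, m', hem, ?_⟩
        have hh : ((subTwoAux ((d :: l).reverse)).reverse).head? = some e := by
          rw [hem]; rfl
        rw [List.head?_reverse, hL, List.getLast?_reverse] at hh
        simp only [List.head?_cons, Option.some.injEq] at hh
        rw [← hh]
        exact hd
      · unfold addTwo
        rw [List.reverse_reverse, addTwoAux_subTwoAux _ h2r, List.reverse_reverse]
    · rcases eq_or_ne m [] with rfl | hmne
      · -- w = [2]
        simp only [List.nil_append] at hm
        have : addTwoAux (subTwoAux ((d :: l).reverse)) = (d :: l).reverse :=
          addTwoAux_subTwoAux _ h2r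
        rw [hm] at this
        have hw2 : (d :: l).reverse = [2] := by
          rw [← this]; decide
        refine ⟨[0], Or.inl rfl, ?_⟩
        rw [addTwo_zero]
        have := congrArg List.reverse hw2
        simpa using this.symm
      · refine ⟨m.reverse, ?_, ?_⟩
        · right
          have hne2 : m.reverse ≠ [] := by simpa using hmne
          obtain ⟨e, m', hem⟩ := List.exists_cons_of_ne_nil hne2
          refine ⟨e, m', hem, ?_⟩
          intro he0
          have hh : (m.reverse).head? = some e := by rw [hem]; rfl
          rw [List.head?_reverse, List.getLast?_eq_getLast hmne] at hh
          simp only [Option.some.injEq] at hh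
          apply hm0
          have hmem : m.getLast hmne ∈ m := List.getLast_mem hmne
          rw [hh, he0] at hmem
          exact hmem
        · unfold addTwo
          rw [List.reverse_reverse]
          have h1 : addTwoAux (m ++ [0]) = (d :: l).reverse := by
            rw [← hm]; exact addTwoAux_subTwoAux _ h2r
          rw [addTwoAux_append_zero m hm0] at h1
          rw [h1, List.reverse_reverse]

/-! ### Lemmas about `binRep` -/

open Fin.NatCast in
lemma binRep_eq (j : ℕ) (hj : j ≠ 0) :
    binRep j = (Nat.digits 2 j).reverse.map (Nat.cast : ℕ → Digit) := by
  unfold binRep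
  rw [if_neg hj]
  simp only [bind_pure_comp, List.map_eq_map, List.map_id']

lemma binRep_zero : binRep 0 = [0] := by unfold binRep; rw [if_pos rfl]

open Fin.NatCast in
lemma map_val_map_cast (L : List ℕ) (h : ∀ d ∈ L, d < 3) :
    (L.map (Nat.cast : ℕ → Digit)).map Fin.val = L := by
  induction L with
  | nil => rfl
  | cons a l ih =>
    rw [List.map_cons, List.map_cons, ih fun d hd => h d (by simp [hd])]
    rw [Fin.val_cast_of_lt (h a (by simp))]

open Fin.NatCast in
lemma map_cast_map_val (L : List Digit) :
    (L.map Fin.val).map (Nat.cast : ℕ → Digit) = L := by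
  induction L with
  | nil => rfl
  | cons a l ih => rw [List.map_cons, List.map_cons, ih, Fin.cast_val_eq_self]

lemma binRep_map_val (j : ℕ) (hj : j ≠ 0) :
    (binRep j).map Fin.val = (Nat.digits 2 j).reverse := by
  rw [binRep_eq j hj]
  refine map_val_map_cast _ (fun d hd => ?_)
  have := Nat.digits_lt_base (by norm_num : 1 < 2) (List.mem_reverse.mp hd)
  omega

lemma binRep_ne_two (j : ℕ) : (2 : Digit) ∉ binRep j := by
  by_cases hj : j = 0
  · subst hj; rw [binRep_zero]; decide
  · intro hmem
    have : ((2 : Digit)).val ∈ (binRep j).map Fin.val := List.mem_map_of_mem hmem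
    rw [binRep_map_val j hj] at this
    have h2 : ((2:Digit)).val < 2 :=
      Nat.digits_lt_base (by norm_num) (List.mem_reverse.mp this)
    simp at h2

lemma binRep_ne_nil (j : ℕ) : binRep j ≠ [] := by
  by_cases hj : j = 0
  · subst hj; rw [binRep_zero]; simp
  · intro h
    have := binRep_map_val j hj
    rw [h] at this
    have hne : Nat.digits 2 j ≠ [] := Nat.digits_ne_nil_iff_ne_zero.mpr hj
    rw [List.map_nil, eq_comm, List.reverse_eq_nil_iff] at this
    exact hne this

lemma binRep_valid (j : ℕ) :
    binRep j = [0] ∨ ∃ d : Digit, ∃ l, binRep j = d :: l ∧ d ≠ 0 := by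
  by_cases hj : j = 0
  · subst hj; exact Or.inl binRep_zero
  · right
    obtain ⟨d, l, hdl⟩ := List.exists_cons_of_ne_nil (binRep_ne_nil j)
    refine ⟨d, l, hdl, ?_⟩
    have hmv := binRep_map_val j hj
    rw [hdl] at hmv
    have hne : Nat.digits 2 j ≠ [] := Nat.digits_ne_nil_iff_ne_zero.mpr hj
    have hlast := Nat.getLast_digit_ne_zero 2 hj
    have h1 : (Nat.digits 2 j).reverse.head? = some d.val := by
      rw [← hmv]; simp
    rw [List.head?_reverse, List.getLast?_eq_getLast hne] at h1
    simp only [Option.some.injEq] at h1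
    intro hd0
    rw [hd0] at h1
    exact hlast h1

lemma binRep_inj {j j' : ℕ} (h : binRep j = binRep j') : j = j' := by
  have key : ∀ k : ℕ, k ≠ 0 → binRep k ≠ [0] := by
    intro k hk hcon
    have := binRep_map_val k hk
    rw [hcon] at this
    have hd : Nat.digits 2 k = [0] := by
      have := congrArg List.reverse this
      simpa using this.symm
    have h0 := congrArg (Nat.ofDigits 2) hd
    rw [Nat.ofDigits_digits] at h0
    simp [Nat.ofDigits] at h0
    exact hk h0
  by_cases hj : j = 0 <;> by_cases hj' : j' = 0
  · omega
  · exfalso; subst hj; rw [binRep_zero] at h; exact key j' hj' h.symm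
  · exfalso; subst hj'; rw [binRep_zero] at h; exact key j hj h
  · have h1 := binRep_map_val j hj
    have h2 := binRep_map_val j' hj'
    rw [h] at h1
    rw [h1] at h2
    have : Nat.digits 2 j = Nat.digits 2 j' := List.reverse_injective h2
    have := congrArg (Nat.ofDigits 2) this
    rwa [Nat.ofDigits_digits, Nat.ofDigits_digits] at this

lemma binRep_surj (w : List Digit)
    (hv : w = [0] ∨ ∃ d : Digit, ∃ l, w = d :: l ∧ d ≠ 0)
    (h2 : (2 : Digit) ∉ w) : ∃ j, binRep j = w := by
  rcases hv with rfl | ⟨d, l, rfl, hd⟩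
  · exact ⟨0, binRep_zero⟩
  · set L : List ℕ := ((d :: l).map Fin.val).reverse with hL
    have hlt : ∀ x ∈ L, x < 2 := by
      intro x hx
      simp only [hL, List.mem_reverse, List.mem_map] at hx
      obtain ⟨e, he, rfl⟩ := hx
      have he2 : e ≠ 2 := by rintro rfl; exact h2 he
      have hv : e.val ≠ 2 := fun hv => he2 (Fin.ext hv)
      have := e.isLt
      omega
    have hLne : L ≠ [] := by simp [hL]
    have hlast : ∀ hh : L ≠ [], L.getLast hh ≠ 0 := by
      intro hh
      have h1 : L.getLast? = some d.val := by
        rw [List.getLast?_eq_head?_reverse]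
        simp [hL]
      rw [List.getLast?_eq_getLast hh] at h1
      simp only [Option.some.injEq] at h1
      rw [h1]
      intro h0
      exact hd (Fin.ext (by rw [h0]; rfl))
    set j := Nat.ofDigits 2 L with hj
    have hdig : Nat.digits 2 j = L := Nat.digits_ofDigits 2 (by norm_num) L hlt hlast
    have hj0 : j ≠ 0 := by
      intro h0
      rw [h0, Nat.digits_zero] at hdig
      exact hLne hdig.symm
    refine ⟨j, ?_⟩
    rw [binRep_eq j hj0, hdig, hL, List.reverse_reverse]
    exact map_cast_map_val _

/-! ### Lemmas about `G` -/

lemma G_valid (i j : ℕ) : Valid (G i j) := by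
  induction i with
  | zero => exact binRep_valid j
  | succ s ih => exact addTwo_valid ih

lemma G_inj : ∀ i i' j j' : ℕ, G i j = G i' j' → i = i' ∧ j = j' := by
  intro i
  induction i with
  | zero =>
    intro i' j j' h
    cases i' with
    | zero => exact ⟨rfl, binRep_inj h⟩
    | succ s =>
      exfalso
      have h2 : (2 : Digit) ∈ G (s + 1) j' := two_mem_addTwo _
      rw [← h] at h2
      exact binRep_ne_two j h2
  | succ s ih =>
    intro i' j j' h
    cases i' with
    | zero =>
      exfalso
      have h2 : (2 : Digit) ∈ G (s + 1) j := two_mem_addTwo _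
      rw [h] at h2
      exact binRep_ne_two j' h2
    | succ s' =>
      have heq : G s j = G s' j' :=
        addTwo_inj (G_valid s j) (G_valid s' j') h
      obtain ⟨h1, h2⟩ := ih s' j j' heq
      exact ⟨by omega, h2⟩

lemma exists_rep : ∀ n : ℕ, ∀ w : List Digit, Valid w → V w < n →
    ∃ p : ℕ × ℕ, G p.1 p.2 = w := by
  intro n
  induction n with
  | zero => intro w _ h; omega
  | succ n ih =>
    intro w hw hV
    by_cases h2 : (2 : Digit) ∈ w
    · obtain ⟨u, hu, hau⟩ := addTwo_surj hw h2
      have hVu : V u < n := by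
        have := V_lt u
        rw [hau] at this
        omega
      obtain ⟨⟨i, j⟩, hij⟩ := ih u hu hVu
      exact ⟨(i + 1, j), by simp only [G]; rw [hij, hau]⟩
    · obtain ⟨j, hj⟩ := binRep_surj w hw h2
      exact ⟨(0, j), hj⟩

/-- Every digit string that either is the single digit 0 or has first digit different
from 0 appears exactly once in the grid. -/
theorem grid_unique (w : List Digit)
    (h : w = [0] ∨ ∃ d : Digit, ∃ l : List Digit, w = d :: l ∧ d ≠ 0) :
    ∃! p : ℕ × ℕ, G p.1 p.2 = w := by
  obtain ⟨p₀, hp₀⟩ := exists_rep (V w + 1) w h (by omega)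
  refine ⟨p₀, hp₀, ?_⟩
  rintro ⟨i, j⟩ hij
  obtain ⟨i₀, j₀⟩ := p₀
  obtain ⟨h1, h2⟩ := G_inj i i₀ j j₀ (by rw [hij, hp₀])
  simp [h1, h2]
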